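/- arXiv:2310.18710 — 2 statements merged into one kernel-verified Lean document; each statement's English description precedes it below -/
import Mathlib

section
/- Let X be a complete CAT(0) space and Y ⊆ X a nonempty bounded subset with circumradius r_Y := inf{ r > 0 : ∃ x ∈ X, Y ⊆ closed ball B(x,r) }. Then there exists a unique point c_Y ∈ X (the circumcenter) such that Y is contained in the closed ball of radius r_Y centered at c_Y. -/
open Metric Set Filter

open Topology

/-- A map is a geodesic (parametrized by arclength) on a set of parameters. -/
def IsGeodesicOn {X : Type*} [MetricSpace X] (γ : ℝ → X) (s : Set ℝ) : Prop :=
  ∀ ⦃t₁⦄, t₁ ∈ s → ∀ ⦃t₂⦄, t₂ ∈ s → dist (γ t₁) (γ t₂) = |t₁ - t₂|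

/-- A geodesic segment from `x` to `y`, parametrized by arclength on `[0, d(x,y)]`. -/
def IsGeodesicSegment {X : Type*} [MetricSpace X] (γ : ℝ → X) (x y : X) : Prop :=
  γ 0 = x ∧ γ (dist x y) = y ∧ IsGeodesicOn γ (Set.Icc 0 (dist x y))

/-- A CAT(0) space: a geodesic metric space in which every geodesic triangle
satisfies the CAT(0) comparison inequality (expressed via the standard
convexity form of the comparison inequality along geodesics). -/
class CAT0Space (X : Type*) [MetricSpace X] : Prop where
  geodesic : ∀ x y : X, ∃ γ : ℝ → X, IsGeodesicSegment γ x y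
  comparison : ∀ (x y z : X) (γ : ℝ → X), IsGeodesicSegment γ x y →
    ∀ t ∈ Set.Icc (0:ℝ) 1,
      dist z (γ (t * dist x y)) ^ 2 ≤
        (1 - t) * dist z x ^ 2 + t * dist z y ^ 2 - t * (1 - t) * dist x y ^ 2

/-- A subset is geodesically convex if it contains every geodesic segment
between any two of its points. -/
def GeodesicallyConvex {X : Type*} [MetricSpace X] (C : Set X) : Prop :=
  ∀ x ∈ C, ∀ y ∈ C, ∀ γ : ℝ → X, IsGeodesicSegment γ x y →
    ∀ t ∈ Set.Icc 0 (dist x y), γ t ∈ C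


/-- In a complete CAT(0) space, every nonempty bounded subset `Y` has a unique
circumcenter: a point `c` such that `Y` is contained in the closed ball of
radius the circumradius `r_Y` centered at `c`. -/
theorem stmt_3 {X : Type*} [MetricSpace X] [CompleteSpace X] [CAT0Space X]
    (Y : Set X) (hne : Y.Nonempty) (hbdd : Bornology.IsBounded Y) :
    ∃! c : X, Y ⊆ Metric.closedBall c
      (sInf {r : ℝ | 0 < r ∧ ∃ x : X, Y ⊆ Metric.closedBall x r}) := by
  obtain ⟨y₀, hy₀⟩ := hne
  obtain ⟨r₀, hr₀⟩ := hbdd.subset_closedBall y₀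
  set f : X → ℝ := fun x => sSup ((dist x) '' Y) with hfdef
  have hbdd' : ∀ x : X, BddAbove ((dist x) '' Y) := by
    intro x
    refine ⟨dist x y₀ + r₀, ?_⟩
    rintro _ ⟨y, hy, rfl⟩
    have h1 : dist y y₀ ≤ r₀ := hr₀ hy
    calc dist x y ≤ dist x y₀ + dist y₀ y := dist_triangle _ _ _
      _ ≤ dist x y₀ + r₀ := by rw [dist_comm y₀ y]; linarith
  have hfub : ∀ x : X, ∀ y ∈ Y, dist x y ≤ f x := fun x y hy =>
    le_csSup (hbdd' x) ⟨y, hy, rfl⟩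
  have hfle : ∀ x : X, ∀ r : ℝ, (∀ y ∈ Y, dist x y ≤ r) → f x ≤ r := by
    intro x r h
    refine csSup_le (⟨dist x y₀, y₀, hy₀, rfl⟩) ?_
    rintro _ ⟨y, hy, rfl⟩
    exact h y hy
  have hf0 : ∀ x : X, 0 ≤ f x := fun x => le_trans dist_nonneg (hfub x y₀ hy₀)
  set S : Set ℝ := {r : ℝ | 0 < r ∧ ∃ x : X, Y ⊆ Metric.closedBall x r} with hSdef
  set R := sInf S with hRdef
  have hSne : S.Nonempty :=
    ⟨max r₀ 1, lt_of_lt_of_le one_pos (le_max_right _ _),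
      y₀, hr₀.trans (closedBall_subset_closedBall (le_max_left _ _))⟩
  have hSbd : BddBelow S := ⟨0, fun r hr => hr.1.le⟩
  have hR0 : 0 ≤ R := le_csInf hSne fun r hr => hr.1.le
  -- R ≤ f x for every x
  have hRle : ∀ x : X, R ≤ f x := by
    intro x
    refine le_of_forall_pos_le_add fun ε hε => ?_
    refine csInf_le hSbd ⟨by linarith [hf0 x], x, fun y hy => ?_⟩
    rw [mem_closedBall, dist_comm]
    linarith [hfub x y hy]
  -- midpoint inequality
  have hmid : ∀ x x' : X, dist x x' ^ 2 ≤ 2 * f x ^ 2 + 2 * f x' ^ 2 - 4 * R ^ 2 := by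
    intro x x'
    obtain ⟨γ, hγ⟩ := CAT0Space.geodesic x x'
    set m := γ ((1/2 : ℝ) * dist x x') with hmdef
    have key : ∀ y ∈ Y, dist m y ^ 2 ≤
        (1/2) * f x ^ 2 + (1/2) * f x' ^ 2 - (1/4) * dist x x' ^ 2 := by
      intro y hy
      have hc := CAT0Space.comparison x x' y γ hγ (1/2) ⟨by norm_num, by norm_num⟩
      have h1 : dist y x ≤ f x := by rw [dist_comm]; exact hfub x y hy
      have h2 : dist y x' ≤ f x' := by rw [dist_comm]; exact hfub x' y hy
      have h1' : dist y x ^ 2 ≤ f x ^ 2 := pow_le_pow_left₀ dist_nonneg h1 2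
      have h2' : dist y x' ^ 2 ≤ f x' ^ 2 := pow_le_pow_left₀ dist_nonneg h2 2
      rw [dist_comm m y]
      calc dist y m ^ 2 ≤ (1 - 1/2) * dist y x ^ 2 + (1/2) * dist y x' ^ 2
            - (1/2) * (1 - 1/2) * dist x x' ^ 2 := hc
        _ ≤ (1/2) * f x ^ 2 + (1/2) * f x' ^ 2 - (1/4) * dist x x' ^ 2 := by linarith
    set rhs := (1/2) * f x ^ 2 + (1/2) * f x' ^ 2 - (1/4) * dist x x' ^ 2 with hrhs
    have hrhs0 : 0 ≤ rhs := le_trans (sq_nonneg _) (key y₀ hy₀)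
    have hfm : f m ≤ Real.sqrt rhs := by
      refine hfle m _ fun y hy => ?_
      exact (Real.le_sqrt dist_nonneg hrhs0).mpr (key y hy)
    have hRm : R ≤ Real.sqrt rhs := le_trans (hRle m) hfm
    have hR2 : R ^ 2 ≤ rhs := by
      have := pow_le_pow_left₀ hR0 hRm 2
      rwa [Real.sq_sqrt hrhs0] at this
    rw [hrhs] at hR2
    linarith
  -- minimizing sequence
  have hseq : ∀ n : ℕ, ∃ x : X, f x ≤ R + 1 / (n + 1) := by
    intro n
    have hpos : (0:ℝ) < 1 / (n + 1) := by positivity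
    obtain ⟨r, hrS, hrlt⟩ := (csInf_lt_iff hSbd hSne).mp
      (show sInf S < R + 1 / (n + 1) by rw [← hRdef]; linarith)
    obtain ⟨hrpos, x, hx⟩ := hrS
    refine ⟨x, le_trans (hfle x r fun y hy => ?_) hrlt.le⟩
    have := hx hy
    rw [mem_closedBall] at this
    rwa [dist_comm]
  choose x hx using hseq
  have hfx : ∀ N n : ℕ, N ≤ n → f (x n) ≤ R + 1 / (N + 1) := by
    intro N n hNn
    have hNn' : ((N:ℝ) + 1) ≤ (n:ℝ) + 1 := by exact_mod_cast Nat.succ_le_succ hNn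
    have h := one_div_le_one_div_of_le (show (0:ℝ) < (N:ℝ) + 1 by positivity) hNn'
    linarith [hx n]
  set b : ℕ → ℝ := fun N => Real.sqrt (8 * R * (1 / (N + 1)) + 4 * (1 / (N + 1)) ^ 2)
    with hbdef
  have hcauchy : CauchySeq x := by
    refine cauchySeq_of_le_tendsto_0 b (fun n m N hn hm => ?_) ?_
    · have h1 := hfx N n hn
      have h2 := hfx N m hm
      have hd := hmid (x n) (x m)
      have e1 : f (x n) ^ 2 ≤ (R + 1 / (N + 1)) ^ 2 :=
        pow_le_pow_left₀ (hf0 _) h1 2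
      have e2 : f (x m) ^ 2 ≤ (R + 1 / (N + 1)) ^ 2 :=
        pow_le_pow_left₀ (hf0 _) h2 2
      have heN : (0:ℝ) < 1 / ((N:ℝ) + 1) := by positivity
      have hnn : (0:ℝ) ≤ 8 * R * (1 / ((N:ℝ) + 1)) + 4 * (1 / ((N:ℝ) + 1)) ^ 2 := by
        nlinarith
      refine (Real.le_sqrt dist_nonneg hnn).mpr ?_
      nlinarith [sq_nonneg (1 / ((N:ℝ) + 1))]
    · have h0 : Tendsto (fun N : ℕ => (1:ℝ) / (N + 1)) atTop (𝓝 0) :=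
        tendsto_one_div_add_atTop_nhds_zero_nat
      have h1 : Tendsto (fun N : ℕ => 8 * R * (1 / (N + 1)) + 4 * (1 / (N + 1)) ^ 2)
          atTop (𝓝 0) := by
        have := (h0.const_mul (8 * R)).add ((h0.pow 2).const_mul 4)
        simpa using this
      have := (Real.continuous_sqrt.tendsto 0).comp h1
      simpa [hbdef, Real.sqrt_zero, Function.comp_def] using this
  obtain ⟨c, hc⟩ := cauchySeq_tendsto_of_complete hcauchy
  have hcY : ∀ y ∈ Y, dist y c ≤ R := by
    intro y hy
    have hten : Tendsto (fun n : ℕ => dist c (x n) + (R + 1 / (n + 1))) atTop (𝓝 R) := by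
      have h1 : Tendsto (fun n : ℕ => dist c (x n)) atTop (𝓝 0) := by
        simpa [dist_comm] using tendsto_iff_dist_tendsto_zero.mp hc
      have h2 : Tendsto (fun n : ℕ => R + 1 / ((n:ℝ) + 1)) atTop (𝓝 R) := by
        simpa using (tendsto_const_nhds (x := R)).add
          tendsto_one_div_add_atTop_nhds_zero_nat
      simpa using h1.add h2
    rw [dist_comm]
    refine ge_of_tendsto' hten fun n => ?_
    calc dist c y ≤ dist c (x n) + dist (x n) y := dist_triangle _ _ _
      _ ≤ dist c (x n) + f (x n) := by linarith [hfub (x n) y hy]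
      _ ≤ dist c (x n) + (R + 1 / (n + 1)) := by linarith [hx n]
  refine ⟨c, fun y hy => mem_closedBall.mpr (hcY y hy), ?_⟩
  intro c' hc'
  have hfc : f c ≤ R := hfle c R fun y hy => by rw [dist_comm]; exact hcY y hy
  have hfc' : f c' ≤ R := hfle c' R fun y hy => by
    have := hc' hy; rw [mem_closedBall] at this; rwa [dist_comm]
  have := hmid c' c
  have e1 : f c' ^ 2 ≤ R ^ 2 := pow_le_pow_left₀ (hf0 _) hfc' 2
  have e2 : f c ^ 2 ≤ R ^ 2 := pow_le_pow_left₀ (hf0 _) hfc 2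
  have hdd : dist c' c ^ 2 ≤ 0 := by linarith
  have : dist c' c = 0 := by nlinarith [dist_nonneg (x := c') (y := c)]
  exact dist_eq_zero.mp this
end

section
/- Let T be a metric tree (an ℝ-tree) with Gromov boundary ∂T, and let S ⊆ ∂T be a finite set of n ≥ 3 distinct boundary points. Fix a basepoint and define F_S : T → ℝ by F_S(x) = ∑_{C ≠ C' ∈ S} (C|C')_x, the sum of Gromov products based at x over unordered pairs of distinct points of S. Then F_S is convex and proper, and consequently its set of minima is a nonempty bounded closed convex subset of T. -/
open Metric Set Filter

/-- The Gromov product of `x` and `y` with respect to the basepoint `o`. -/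
noncomputable def gromovProd {X : Type*} [MetricSpace X] (o x y : X) : ℝ :=
  (dist x o + dist y o - dist x y) / 2

section Aux
variable {T : Type*} [MetricSpace T]

lemma gp_nonneg (o x y : T) : 0 ≤ gromovProd o x y := by
  have h := dist_triangle x o y
  have h2 : dist o y = dist y o := dist_comm o y
  simp only [gromovProd]; linarith

lemma gp_comm (o x y : T) : gromovProd o x y = gromovProd o y x := by
  simp only [gromovProd]; rw [dist_comm x y]; ring

lemma gp_add_gp (x o p : T) : gromovProd x p o + gromovProd o p x = dist x o := by
  simp only [gromovProd]
  rw [dist_comm o x]; ring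

lemma gp_lip (x y u v : T) : |gromovProd x u v - gromovProd y u v| ≤ dist x y := by
  have h1 : |dist x u - dist y u| ≤ dist x y := abs_dist_sub_le x y u
  have h2 : |dist x v - dist y v| ≤ dist x y := abs_dist_sub_le x y v
  rw [abs_le] at h1 h2 ⊢
  have c1 : dist u x = dist x u := dist_comm u x
  have c2 : dist u y = dist y u := dist_comm u y
  have c3 : dist v x = dist x v := dist_comm v x
  have c4 : dist v y = dist y v := dist_comm v y
  simp only [gromovProd]
  constructor <;> [skip; skip] <;> linarith [h1.1, h1.2, h2.1, h2.2]


lemma twoSmall (htree : ∀ o x y z : T, min (gromovProd o x z) (gromovProd o z y) ≤ gromovProd o x y) (x o a b c : T) :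
    (gromovProd x a o ≤ gromovProd x b c + gromovProd x a c + gromovProd x a b ∧
     gromovProd x b o ≤ gromovProd x b c + gromovProd x a c + gromovProd x a b) ∨
    (gromovProd x a o ≤ gromovProd x b c + gromovProd x a c + gromovProd x a b ∧
     gromovProd x c o ≤ gromovProd x b c + gromovProd x a c + gromovProd x a b) ∨
    (gromovProd x b o ≤ gromovProd x b c + gromovProd x a c + gromovProd x a b ∧
     gromovProd x c o ≤ gromovProd x b c + gromovProd x a c + gromovProd x a b) := by
  have h1 := htree x a b o
  have h2 := htree x b c o
  have h3 := htree x a c o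
  rw [gp_comm x o b] at h1
  rw [gp_comm x o c] at h2
  rw [gp_comm x o c] at h3
  have n1 := gp_nonneg x b c
  have n2 := gp_nonneg x a c
  have n3 := gp_nonneg x a b
  rcases min_le_iff.mp h1 with h1' | h1' <;>
  rcases min_le_iff.mp h2 with h2' | h2' <;>
  rcases min_le_iff.mp h3 with h3' | h3' <;>
  first
    | exact Or.inl ⟨by linarith, by linarith⟩
    | exact Or.inr (Or.inl ⟨by linarith, by linarith⟩)
    | exact Or.inr (Or.inr ⟨by linarith, by linarith⟩)

lemma key5 (htree : ∀ o x y z : T, min (gromovProd o x z) (gromovProd o z y) ≤ gromovProd o x y) (x o a b c : T) :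
    dist x o ≤ (gromovProd x b c + gromovProd x a c + gromovProd x a b)
      + (gromovProd o b c + gromovProd o a c + gromovProd o a b) := by
  have hx := twoSmall htree x o a b c
  have ho := twoSmall htree o x a b c
  have ia := gp_add_gp x o a
  have ib := gp_add_gp x o b
  have ic := gp_add_gp x o c
  rcases hx with ⟨hxa, hxb⟩ | ⟨hxa, hxc⟩ | ⟨hxb, hxc⟩ <;>
  rcases ho with ⟨hoa, hob⟩ | ⟨hoa, hoc⟩ | ⟨hob, hoc⟩ <;>
  linarith

lemma midpt (htree : ∀ o x y z : T, min (gromovProd o x z) (gromovProd o z y) ≤ gromovProd o x y) (p q q' z : T) {ℓ : ℝ} (h1 : dist q z = ℓ) (h2 : dist z q' = ℓ)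
    (h3 : dist q q' = 2 * ℓ) :
    dist p z + ℓ ≤ max (dist p q) (dist p q') := by
  have h := htree p q q' z
  simp only [gromovProd] at h
  rw [h1, h2, h3] at h
  have c1 : dist q p = dist p q := dist_comm q p
  have c2 : dist q' p = dist p q' := dist_comm q' p
  have c3 : dist z p = dist p z := dist_comm z p
  rcases min_le_iff.mp h with h' | h'
  · exact le_trans (by linarith) (le_max_right (dist p q) (dist p q'))
  · exact le_trans (by linarith) (le_max_left (dist p q) (dist p q'))

lemma dist_convexOn (htree : ∀ o x y z : T, min (gromovProd o x z) (gromovProd o z y) ≤ gromovProd o x y) {γ : ℝ → T} {d : ℝ} (hγ : IsGeodesicOn γ (Set.Icc 0 d)) (a : T) :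
    ConvexOn ℝ (Set.Icc 0 d) fun t => dist a (γ t) := by
  refine ⟨convex_Icc _ _, fun t₁ ht₁ t₂ ht₂ α β hα hβ hab => ?_⟩
  simp only [smul_eq_mul]
  set s := α * t₁ + β * t₂ with hs_def
  have hs : s ∈ Set.Icc 0 d := (convex_Icc 0 d) ht₁ ht₂ hα hβ hab
  have hα' : α = 1 - β := by linarith
  set L := |t₁ - t₂| with hL_def
  have hL0 : 0 ≤ L := abs_nonneg _
  have e1 : t₁ - s = β * (t₁ - t₂) := by rw [hs_def, hα']; ring
  have e2 : s - t₂ = α * (t₁ - t₂) := by rw [hs_def, hα']; ring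
  have d1 : dist (γ t₁) (γ s) = β * L := by
    rw [hγ ht₁ hs, e1, abs_mul, abs_of_nonneg hβ]
  have d2 : dist (γ s) (γ t₂) = α * L := by
    rw [hγ hs ht₂, e2, abs_mul, abs_of_nonneg hα]
  have d3 : dist (γ t₁) (γ t₂) = L := hγ ht₁ ht₂
  have hLsum : α * L + β * L = L := by rw [← add_mul, hab, one_mul]
  have h := htree a (γ t₁) (γ t₂) (γ s)
  simp only [gromovProd] at h
  rw [d1, d2, d3] at h
  have c1 : dist (γ t₁) a = dist a (γ t₁) := dist_comm _ _
  have c2 : dist (γ t₂) a = dist a (γ t₂) := dist_comm _ _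
  have c3 : dist (γ s) a = dist a (γ s) := dist_comm _ _
  set A := dist a (γ t₁)
  set B := dist a (γ t₂)
  set Z := dist a (γ s)
  have hZsum : α * Z + β * Z = Z := by rw [← add_mul, hab, one_mul]
  rcases min_le_iff.mp h with h' | h'
  · -- Z ≤ B - α * L ; triangle Z ≤ A + β * L
    have tz : Z ≤ A + β * L := by
      have := dist_triangle a (γ t₁) (γ s)
      rw [← d1] at *; linarith [dist_triangle a (γ t₁) (γ s)]
    have hz : Z ≤ B - α * L := by linarith
    have e1' : α * Z ≤ α * (A + β * L) := mul_le_mul_of_nonneg_left tz hα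
    have e2' : β * Z ≤ β * (B - α * L) := mul_le_mul_of_nonneg_left hz hβ
    nlinarith [e1', e2', hZsum]
  · have tz : Z ≤ B + α * L := by
      have h4 := dist_triangle a (γ t₂) (γ s)
      have : dist (γ t₂) (γ s) = α * L := by rw [dist_comm, d2]
      linarith
    have hz : Z ≤ A - β * L := by linarith
    have e1' : β * Z ≤ β * (B + α * L) := mul_le_mul_of_nonneg_left tz hβ
    have e2' : α * Z ≤ α * (A - β * L) := mul_le_mul_of_nonneg_left hz hα
    nlinarith [e1', e2', hZsum]

end Aux

section Aux2
variable {T : Type*} [MetricSpace T]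

lemma convexOn_glue {s : Set ℝ} {f g : ℝ → ℝ} (c : ℝ) (hf : ConvexOn ℝ s f)
    (hg : ConvexOn ℝ s g) : ConvexOn ℝ s (fun t => (f t + g t - c) / 2) := by
  refine ⟨hf.1, fun x hx y hy a b ha hb hab => ?_⟩
  have h1 := hf.2 hx hy ha hb hab
  have h2 := hg.2 hx hy ha hb hab
  simp only [smul_eq_mul] at *
  have hc : a * c + b * c = c := by rw [← add_mul, hab, one_mul]
  linarith

lemma gromov_convexOn
    (htree : ∀ o x y z : T, min (gromovProd o x z) (gromovProd o z y) ≤ gromovProd o x y)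
    {γ : ℝ → T} {d : ℝ} (hγ : IsGeodesicOn γ (Set.Icc 0 d)) (u v : T) :
    ConvexOn ℝ (Set.Icc 0 d) fun t => gromovProd (γ t) u v := by
  have heq : (fun t => gromovProd (γ t) u v)
      = fun t => (dist u (γ t) + dist v (γ t) - dist u v) / 2 := by
    funext t; simp only [gromovProd]
  rw [heq]
  exact convexOn_glue (dist u v) (dist_convexOn htree hγ u) (dist_convexOn htree hγ v)

lemma convexOn_lim {s : Set ℝ} {g : ℝ → ℝ → ℝ} {h : ℝ → ℝ} (hs : Convex ℝ s)
    (hc : ∀ c, ConvexOn ℝ s (g c))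
    (hl : ∀ t ∈ s, Tendsto (fun c => g c t) atTop (nhds (h t))) : ConvexOn ℝ s h := by
  refine ⟨hs, fun x hx y hy a b ha hb hab => ?_⟩
  have hmem : a • x + b • y ∈ s := hs hx hy ha hb hab
  refine le_of_tendsto_of_tendsto' (hl _ hmem)
    (((hl x hx).const_mul a).add ((hl y hy).const_mul b)) fun c => ?_
  simpa using (hc c).2 hx hy ha hb hab

lemma convexOn_finset_sum {ι : Type*} (t : Finset ι) {s : Set ℝ} (hs : Convex ℝ s)
    {f : ι → ℝ → ℝ} (h : ∀ i ∈ t, ConvexOn ℝ s (f i)) :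
    ConvexOn ℝ s (fun x => ∑ i ∈ t, f i x) := by
  classical
  induction t using Finset.induction_on with
  | empty => simpa using convexOn_const 0 hs
  | insert _ _ hnotmem ih =>
    rename_i a t'
    simp only [Finset.sum_insert hnotmem]
    exact (h a (Finset.mem_insert_self a t')).add
      (ih fun i hi => h i (Finset.mem_insert_of_mem hi))

lemma gate_exists [CompleteSpace T]
    (htree : ∀ o x y z : T, min (gromovProd o x z) (gromovProd o z y) ≤ gromovProd o x y)
    {C : Set T} (hne : C.Nonempty) (hcl : IsClosed C)
    (hmid : ∀ q ∈ C, ∀ q' ∈ C, ∃ z ∈ C,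
      dist q z = dist q q' / 2 ∧ dist z q' = dist q q' / 2)
    (p : T) : ∃ g ∈ C, ∀ q ∈ C, dist p g ≤ dist p q := by
  set e := sInf ((dist p) '' C) with he_def
  have hbb : BddBelow ((dist p) '' C) := ⟨0, by rintro y ⟨q, _, rfl⟩; exact dist_nonneg⟩
  have hene : ((dist p) '' C).Nonempty := hne.image _
  have hle : ∀ q ∈ C, e ≤ dist p q := fun q hq => csInf_le hbb ⟨q, hq, rfl⟩
  have hex : ∀ k : ℕ, ∃ q, q ∈ C ∧ dist p q < e + 1 / (k + 1) := by
    intro k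
    have hpos : (0:ℝ) < 1 / ((k:ℝ) + 1) := by positivity
    obtain ⟨y, ⟨q, hq, rfl⟩, hy⟩ := exists_lt_of_csInf_lt hene (lt_add_of_pos_right e hpos)
    exact ⟨q, hq, hy⟩
  choose q hqC hqd using hex
  have hb0 : Tendsto (fun k : ℕ => 2 / ((k:ℝ) + 1)) atTop (nhds 0) := by
    have := tendsto_one_div_add_atTop_nhds_zero_nat.const_mul (2:ℝ)
    simpa [div_eq_mul_inv] using this
  have hcauchy : CauchySeq q := by
    apply cauchySeq_of_le_tendsto_0 (fun k : ℕ => 2 / ((k:ℝ) + 1)) _ hb0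
    intro i j N hNi hNj
    obtain ⟨z, hzC, hz1, hz2⟩ := hmid (q i) (hqC i) (q j) (hqC j)
    have hm := midpt htree p (q i) (q j) z hz1 hz2 (by ring)
    have hez : e ≤ dist p z := hle z hzC
    have h1N : 1 / ((i:ℝ) + 1) ≤ 1 / ((N:ℝ) + 1) := by
      apply one_div_le_one_div_of_le (by positivity)
      exact_mod_cast Nat.succ_le_succ hNi
    have h2N : 1 / ((j:ℝ) + 1) ≤ 1 / ((N:ℝ) + 1) := by
      apply one_div_le_one_div_of_le (by positivity)
      exact_mod_cast Nat.succ_le_succ hNj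
    have hmax : max (dist p (q i)) (dist p (q j)) ≤ e + 1 / ((N:ℝ) + 1) :=
      max_le (by linarith [hqd i]) (by linarith [hqd j])
    have : dist p z + dist (q i) (q j) / 2 ≤ e + 1 / ((N:ℝ) + 1) := le_trans hm hmax
    show dist (q i) (q j) ≤ 2 / ((N:ℝ) + 1)
    have h22 : 2 / ((N:ℝ) + 1) = 2 * (1 / ((N:ℝ) + 1)) := by ring
    linarith
  obtain ⟨g, hg⟩ := cauchySeq_tendsto_of_complete hcauchy
  have hgC : g ∈ C := hcl.mem_of_tendsto hg (Eventually.of_forall hqC)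
  have hdist : Tendsto (fun k => dist p (q k)) atTop (nhds (dist p g)) :=
    (tendsto_const_nhds : Tendsto (fun _ : ℕ => p) atTop (nhds p)).dist hg
  have hpge : dist p g ≤ e := by
    have hlim2 : Tendsto (fun k : ℕ => e + 1 / ((k:ℝ) + 1)) atTop (nhds (e + 0)) :=
      tendsto_const_nhds.add tendsto_one_div_add_atTop_nhds_zero_nat
    rw [add_zero] at hlim2
    exact le_of_tendsto_of_tendsto' hdist hlim2 fun k => (hqd k).le
  exact ⟨g, hgC, fun q' hq' => le_trans hpge (hle q' hq')⟩

end Aux2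
/-- Let `T` be a complete metric tree (a geodesic `0`-hyperbolic space), and let
`S` be a set of `n ≥ 3` pairwise distinct boundary points, represented by
pairwise non-asymptotic geodesic rays `r i`. For `x ∈ T` let `(Cᵢ|Cⱼ)_x` be the
Gromov product of the corresponding ends (the limit `gp x i j` of the Gromov
products along the rays), and set `F_S(x) = ∑_{i<j} (Cᵢ|Cⱼ)_x`. Then `F_S` is
convex and proper, and its set of minima is nonempty, bounded, closed and
convex. -/
theorem stmt_18 {T : Type*} [MetricSpace T] [CompleteSpace T]
    (hgeo : ∀ x y : T, ∃ γ : ℝ → T, IsGeodesicSegment γ x y)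
    (htree : ∀ o x y z : T,
      min (gromovProd o x z) (gromovProd o z y) ≤ gromovProd o x y)
    (n : ℕ) (hn : 3 ≤ n)
    (r : Fin n → ℝ → T) (hray : ∀ i, IsGeodesicOn (r i) (Set.Ici 0))
    (hdistinct : ∀ i j : Fin n, i ≠ j →
      ∀ K : ℝ, ∃ t : ℝ, 0 ≤ t ∧ K < dist (r i t) (r j t))
    (gp : T → Fin n → Fin n → ℝ)
    (hgp : ∀ (x : T) (i j : Fin n), i ≠ j →
      Tendsto (fun t => gromovProd x (r i t) (r j t)) atTop (nhds (gp x i j)))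
    (F : T → ℝ)
    (hF : ∀ x : T, F x =
      ∑ p ∈ Finset.univ.filter (fun p : Fin n × Fin n => p.1 < p.2), gp x p.1 p.2) :
    (∀ (x y : T) (γ : ℝ → T), IsGeodesicSegment γ x y →
        ConvexOn ℝ (Set.Icc 0 (dist x y)) fun t => F (γ t)) ∧
    (∀ M : ℝ, Bornology.IsBounded {x : T | F x ≤ M}) ∧
    {x : T | ∀ y : T, F x ≤ F y}.Nonempty ∧
    Bornology.IsBounded {x : T | ∀ y : T, F x ≤ F y} ∧
    IsClosed {x : T | ∀ y : T, F x ≤ F y} ∧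
    GeodesicallyConvex {x : T | ∀ y : T, F x ≤ F y} := by
  classical
  have h0n : 0 < n := by omega
  have h1n : 1 < n := by omega
  have h2n : 2 < n := by omega
  set i0 : Fin n := ⟨0, h0n⟩ with hi0
  set i1 : Fin n := ⟨1, h1n⟩ with hi1
  set i2 : Fin n := ⟨2, h2n⟩ with hi2
  have hlt01 : i0 < i1 := by rw [hi0, hi1]; exact Fin.mk_lt_mk.mpr (by norm_num)
  have hlt02 : i0 < i2 := by rw [hi0, hi2]; exact Fin.mk_lt_mk.mpr (by norm_num)
  have hlt12 : i1 < i2 := by rw [hi1, hi2]; exact Fin.mk_lt_mk.mpr (by norm_num)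
  have hne01 : i0 ≠ i1 := ne_of_lt hlt01
  have hne02 : i0 ≠ i2 := ne_of_lt hlt02
  have hne12 : i1 ≠ i2 := ne_of_lt hlt12
  set p0 : T := r i0 0 with hp0
  set P := Finset.univ.filter (fun q : Fin n × Fin n => q.1 < q.2) with hP
  have hgpge0 : ∀ (x : T) (i j : Fin n), i ≠ j → 0 ≤ gp x i j := fun x i j hij =>
    ge_of_tendsto (hgp x i j hij) (Eventually.of_forall fun t => gp_nonneg x _ _)
  have hFpos : ∀ x, 0 ≤ F x := by
    intro x; rw [hF x]
    exact Finset.sum_nonneg fun q hq =>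
      hgpge0 x q.1 q.2 (ne_of_lt (Finset.mem_filter.mp hq).2)
  have hgplip : ∀ (x y : T) (i j : Fin n), i ≠ j → |gp x i j - gp y i j| ≤ dist x y := by
    intro x y i j hij
    exact le_of_tendsto ((hgp x i j hij).sub (hgp y i j hij)).abs
      (Eventually.of_forall fun t => gp_lip x y _ _)
  have hFlip : ∀ x y : T, |F x - F y| ≤ (P.card : ℝ) * dist x y := by
    intro x y
    rw [hF x, hF y, ← Finset.sum_sub_distrib]
    calc |∑ q ∈ P, (gp x q.1 q.2 - gp y q.1 q.2)|
        ≤ ∑ q ∈ P, |gp x q.1 q.2 - gp y q.1 q.2| := Finset.abs_sum_le_sum_abs _ _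
      _ ≤ ∑ _q ∈ P, dist x y := Finset.sum_le_sum fun q hq =>
          hgplip x y q.1 q.2 (ne_of_lt (Finset.mem_filter.mp hq).2)
      _ = (P.card : ℝ) * dist x y := by rw [Finset.sum_const, nsmul_eq_mul]
  have hcont : Continuous F := by
    have hlw : LipschitzWith (P.card) F := by
      apply LipschitzWith.of_dist_le_mul
      intro x y
      rw [Real.dist_eq]
      exact_mod_cast hFlip x y
    exact hlw.continuous
  -- Part 1 : convexity along geodesics
  have hconv : ∀ (x y : T) (γ : ℝ → T), IsGeodesicSegment γ x y →
      ConvexOn ℝ (Set.Icc 0 (dist x y)) fun t => F (γ t) := by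
    intro x y γ hseg
    obtain ⟨hγ0, hγd, hγ⟩ := hseg
    have heq : (fun t => F (γ t)) = fun t => ∑ q ∈ P, gp (γ t) q.1 q.2 := by
      funext t; rw [hF (γ t)]
    rw [heq]
    refine convexOn_finset_sum P (convex_Icc _ _)
      (f := fun q => fun t => gp (γ t) q.1 q.2) fun q hq => ?_
    have hijne : q.1 ≠ q.2 := ne_of_lt (Finset.mem_filter.mp hq).2
    exact convexOn_lim (g := fun c t => gromovProd (γ t) (r q.1 c) (r q.2 c))
      (convex_Icc _ _) (fun c => gromov_convexOn htree hγ _ _)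
      (fun t ht => hgp (γ t) q.1 q.2 hijne)
  -- properness bound
  have hbound : ∀ x o : T, dist x o ≤
      (gp x i1 i2 + gp x i0 i2 + gp x i0 i1) + (gp o i1 i2 + gp o i0 i2 + gp o i0 i1) := by
    intro x o
    have hT : Tendsto (fun t => (gromovProd x (r i1 t) (r i2 t) + gromovProd x (r i0 t) (r i2 t)
        + gromovProd x (r i0 t) (r i1 t)) + (gromovProd o (r i1 t) (r i2 t)
        + gromovProd o (r i0 t) (r i2 t) + gromovProd o (r i0 t) (r i1 t))) atTop
        (nhds ((gp x i1 i2 + gp x i0 i2 + gp x i0 i1)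
          + (gp o i1 i2 + gp o i0 i2 + gp o i0 i1))) :=
      ((((hgp x i1 i2 hne12).add (hgp x i0 i2 hne02)).add (hgp x i0 i1 hne01)).add
        (((hgp o i1 i2 hne12).add (hgp o i0 i2 hne02)).add (hgp o i0 i1 hne01)))
    exact ge_of_tendsto hT (Eventually.of_forall fun t => key5 htree x o _ _ _)
  have hF3 : ∀ x : T, gp x i1 i2 + gp x i0 i2 + gp x i0 i1 ≤ F x := by
    intro x
    have hsub : ({(i0,i1),(i0,i2),(i1,i2)} : Finset (Fin n × Fin n)) ⊆ P := by
      intro q hq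
      simp only [Finset.mem_insert, Finset.mem_singleton] at hq
      rcases hq with rfl | rfl | rfl <;>
        simp only [hP, Finset.mem_filter, Finset.mem_univ, true_and] <;>
        first | exact hlt01 | exact hlt02 | exact hlt12
    have hm1 : ((i0,i1) : Fin n × Fin n) ∉ ({(i0,i2),(i1,i2)} : Finset (Fin n × Fin n)) := by
      simp only [Finset.mem_insert, Finset.mem_singleton, Prod.mk.injEq, not_or, not_and]
      exact ⟨fun _ => hne12, fun h => absurd h hne01⟩
    have hm2 : ((i0,i2) : Fin n × Fin n) ∉ ({(i1,i2)} : Finset (Fin n × Fin n)) := by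
      simp only [Finset.mem_singleton, Prod.mk.injEq, not_and]
      exact fun h => absurd h hne01
    have hsum : ∑ q ∈ ({(i0,i1),(i0,i2),(i1,i2)} : Finset (Fin n × Fin n)), gp x q.1 q.2
        = gp x i0 i1 + gp x i0 i2 + gp x i1 i2 := by
      rw [Finset.sum_insert hm1, Finset.sum_insert hm2, Finset.sum_singleton]; ring
    have hle := Finset.sum_le_sum_of_subset_of_nonneg hsub
      (fun q hq _ => hgpge0 x q.1 q.2 (ne_of_lt (Finset.mem_filter.mp hq).2))
    rw [hsum] at hle
    rw [hF x]; linarith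
  -- Part 2 : bounded sublevel sets
  have hbdd : ∀ M : ℝ, Bornology.IsBounded {x : T | F x ≤ M} := by
    intro M
    apply (Metric.isBounded_closedBall (x := p0) (r := M + F p0)).subset
    intro x hx
    simp only [Set.mem_setOf_eq] at hx
    rw [Metric.mem_closedBall]
    have h1 := hbound x p0
    have h2 := hF3 x
    have h3 := hF3 p0
    linarith
  -- Nonemptiness of the set of minima
  have hrne : (Set.range F).Nonempty := ⟨F p0, p0, rfl⟩
  have hrbb : BddBelow (Set.range F) := ⟨0, by rintro y ⟨x, rfl⟩; exact hFpos x⟩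
  set m := sInf (Set.range F) with hm_def
  have hmle : ∀ y, m ≤ F y := fun y => csInf_le hrbb ⟨y, rfl⟩
  set S : ℕ → Set T := fun k => {x : T | F x ≤ m + 1 / ((k : ℝ) + 1)} with hS_def
  have hSne : ∀ k, (S k).Nonempty := by
    intro k
    have hpos : (0:ℝ) < 1 / ((k:ℝ) + 1) := by positivity
    obtain ⟨y, ⟨x, rfl⟩, hy⟩ := exists_lt_of_csInf_lt hrne (lt_add_of_pos_right m hpos)
    exact ⟨x, le_of_lt hy⟩
  have hScl : ∀ k, IsClosed (S k) := fun k => isClosed_le hcont continuous_const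
  have hSmono : ∀ {j k : ℕ}, j ≤ k → S k ⊆ S j := by
    intro j k hjk x hx
    simp only [hS_def, Set.mem_setOf_eq] at hx ⊢
    have hd : 1 / ((k:ℝ) + 1) ≤ 1 / ((j:ℝ) + 1) :=
      one_div_le_one_div_of_le (by positivity) (by exact_mod_cast Nat.succ_le_succ hjk)
    linarith
  have hSmid : ∀ k, ∀ q ∈ S k, ∀ q' ∈ S k, ∃ z ∈ S k,
      dist q z = dist q q' / 2 ∧ dist z q' = dist q q' / 2 := by
    intro k q hq q' hq'
    obtain ⟨γ, hseg⟩ := hgeo q q'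
    obtain ⟨hγ0, hγd, hγ⟩ := hseg
    have hd0 : 0 ≤ dist q q' := dist_nonneg
    have hcg := hconv q q' γ ⟨hγ0, hγd, hγ⟩
    have h0m : (0:ℝ) ∈ Set.Icc 0 (dist q q') := ⟨le_refl 0, hd0⟩
    have hdm : dist q q' ∈ Set.Icc 0 (dist q q') := ⟨hd0, le_refl _⟩
    have h2 := hcg.2 h0m hdm (by norm_num : (0:ℝ) ≤ 1/2) (by norm_num : (0:ℝ) ≤ 1/2)
      (by norm_num : (1:ℝ)/2 + 1/2 = 1)
    simp only [smul_eq_mul] at h2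
    have harg : (1:ℝ)/2 * 0 + 1/2 * dist q q' = dist q q' / 2 := by ring
    rw [harg, hγ0, hγd] at h2
    have hhalf : dist q q' / 2 ∈ Set.Icc 0 (dist q q') := ⟨by linarith, by linarith⟩
    refine ⟨γ (dist q q' / 2), ?_, ?_, ?_⟩
    · simp only [hS_def, Set.mem_setOf_eq] at hq hq' ⊢
      linarith
    · have e := hγ h0m hhalf
      rw [hγ0] at e
      rw [e, zero_sub, abs_neg, abs_of_nonneg (by linarith : (0:ℝ) ≤ dist q q' / 2)]
    · have e := hγ hhalf hdm
      rw [hγd] at e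
      rw [e]
      have h5 : dist q q' / 2 - dist q q' = -(dist q q' / 2) := by ring
      rw [h5, abs_neg, abs_of_nonneg (by linarith : (0:ℝ) ≤ dist q q' / 2)]
  have hgate : ∀ k : ℕ, ∃ g ∈ S k, ∀ q ∈ S k, dist p0 g ≤ dist p0 q :=
    fun k => gate_exists htree (hSne k) (hScl k) (hSmid k) p0
  choose g hgS hgmin using hgate
  set e : ℕ → ℝ := fun k => dist p0 (g k) with he_def
  have hemono : ∀ {j k : ℕ}, j ≤ k → e j ≤ e k := by
    intro j k hjk
    exact hgmin j (g k) (hSmono hjk (hgS k))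
  have hebdd : BddAbove (Set.range e) := by
    have hS0 : S 0 ⊆ {x : T | F x ≤ m + 1} := by
      intro x hx
      simp only [hS_def, Set.mem_setOf_eq] at hx ⊢
      norm_num at hx
      linarith
    obtain ⟨R, hR⟩ := (hbdd (m + 1)).subset_closedBall p0
    refine ⟨R, ?_⟩
    rintro y ⟨k, rfl⟩
    have h1 : g k ∈ Metric.closedBall p0 R := hR (hS0 (hSmono (Nat.zero_le k) (hgS k)))
    have h2 := Metric.mem_closedBall.mp h1
    show dist p0 (g k) ≤ R
    rw [dist_comm]; exact h2
  set E := sSup (Set.range e) with hE_def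
  have heE : ∀ k, e k ≤ E := fun k => le_csSup hebdd ⟨k, rfl⟩
  have hcauchy : CauchySeq g := by
    rw [Metric.cauchySeq_iff']
    intro ε hε
    obtain ⟨y, ⟨N, rfl⟩, hy⟩ := exists_lt_of_lt_csSup (Set.range_nonempty e)
      (show E - ε/2 < E by linarith)
    refine ⟨N, fun k hk => ?_⟩
    obtain ⟨z, hzS, hz1, hz2⟩ := hSmid N (g k) (hSmono hk (hgS k)) (g N) (hgS N)
    have hm' := midpt htree p0 (g k) (g N) z hz1 hz2 (by ring)
    have hez : e N ≤ dist p0 z := hgmin N z hzS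
    have hmax : max (dist p0 (g k)) (dist p0 (g N)) ≤ E := max_le (heE k) (heE N)
    have h6 := le_trans hm' hmax
    calc dist (g k) (g N) ≤ 2 * (E - e N) := by linarith
      _ < ε := by linarith
  obtain ⟨xmin, hxmin⟩ := cauchySeq_tendsto_of_complete hcauchy
  have hxS : ∀ j : ℕ, xmin ∈ S j := by
    intro j
    apply (hScl j).mem_of_tendsto hxmin
    filter_upwards [eventually_ge_atTop j] with k hk
    exact hSmono hk (hgS k)
  have hxmin_le : ∀ y, F xmin ≤ F y := by
    intro y
    have hxm : F xmin ≤ m := by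
      apply le_of_forall_pos_le_add
      intro ε hε
      obtain ⟨k, hk⟩ := exists_nat_one_div_lt hε
      have h7 := hxS k
      simp only [hS_def, Set.mem_setOf_eq] at h7
      linarith
    exact le_trans hxm (hmle y)
  refine ⟨hconv, hbdd, ⟨xmin, hxmin_le⟩, ?_, ?_, ?_⟩
  · apply (hbdd (F p0)).subset
    intro x hx
    exact hx p0
  · have hseteq : {x : T | ∀ y, F x ≤ F y} = ⋂ y, {x : T | F x ≤ F y} := by
      ext z; simp [Set.mem_iInter]
    rw [hseteq]
    exact isClosed_iInter fun y => isClosed_le hcont continuous_const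
  · intro x hx y hy γ hseg t ht
    simp only [Set.mem_setOf_eq]
    intro w
    have hd0 : (0:ℝ) ≤ dist x y := dist_nonneg
    by_cases hd : dist x y = 0
    · have ht0 : t = 0 := le_antisymm (by rw [← hd]; exact ht.2) ht.1
      rw [ht0, hseg.1]; exact hx w
    · have hdpos : 0 < dist x y := lt_of_le_of_ne hd0 (Ne.symm hd)
      have hcg := hconv x y γ hseg
      have hb : 0 ≤ t / dist x y := div_nonneg ht.1 hd0
      have ha : 0 ≤ 1 - t / dist x y := by
        have : t / dist x y ≤ 1 := (div_le_one hdpos).mpr ht.2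
        linarith
      have hab : (1 - t / dist x y) + t / dist x y = 1 := by ring
      have h2 := hcg.2 (⟨le_refl 0, hd0⟩ : (0:ℝ) ∈ Set.Icc 0 (dist x y))
        (⟨hd0, le_refl _⟩ : dist x y ∈ Set.Icc 0 (dist x y)) ha hb hab
      simp only [smul_eq_mul] at h2
      have harg : (1 - t / dist x y) * 0 + t / dist x y * dist x y = t := by
        field_simp
        ring
      rw [harg, hseg.1, hseg.2.1] at h2
      have e1 : (1 - t / dist x y) * F x ≤ (1 - t / dist x y) * F w :=
        mul_le_mul_of_nonneg_left (hx w) ha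
      have e2 : (t / dist x y) * F y ≤ (t / dist x y) * F w :=
        mul_le_mul_of_nonneg_left (hy w) hb
      have e3 : (1 - t / dist x y) * F w + (t / dist x y) * F w = F w := by ring
      linarith
end
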